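/- External totality proof for general-recursive addition in Teqt: let plus be λx₂. rec f(x₁) = case x₁ x₂ (λz. Suc (f z)) and let plustotal be λx₂. ((rec f(x₁) = (case x₁ (λq. terminates) (λz. λq. terminates)) join)). Then the judgment · ⊢ plustotal : Π^↓ x₂:nat. Π^↓ x₁:nat. Terminates (plus x₂ x₁) ↓ is derivable. -/
import Mathlib


set_option autoImplicit false

/-! # Effects -/

inductive Eff : Type
  | tot  -- ↓
  | gen  -- ?
  deriving DecidableEq

/-- Subeffect relation: ↓ ≤ ? and θ ≤ θ. -/
inductive SubEff : Eff → Eff → Prop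
  | ax : SubEff .tot .gen
  | refl (θ : Eff) : SubEff θ θ

/-! # Terms of Teqt (implicit language), de Bruijn representation -/

inductive Tm : Type
  | var : ℕ → Tm
  | app : Tm → Tm → Tm
  | lam : Tm → Tm          -- λx.t, binds index 0 in t
  | zero : Tm
  | suc : Tm → Tm
  | join : Tm
  | terminates : Tm
  | contra : Tm
  | abort : Tm
  | fix : Tm → Tm          -- rec f(x) = t : binds f (index 1) and x (index 0) in t
  | case : Tm → Tm → Tm → Tm

namespace Tm

/-- Shift free de Bruijn indices ≥ c up by one. -/
def liftAt (c : ℕ) : Tm → Tm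
  | .var n => if n < c then .var n else .var (n + 1)
  | .app t u => .app (t.liftAt c) (u.liftAt c)
  | .lam t => .lam (t.liftAt (c + 1))
  | .zero => .zero
  | .suc t => .suc (t.liftAt c)
  | .join => .join
  | .terminates => .terminates
  | .contra => .contra
  | .abort => .abort
  | .fix t => .fix (t.liftAt (c + 2))
  | .case t u v => .case (t.liftAt c) (u.liftAt c) (v.liftAt c)

/-- Shift all free indices up by n. -/
def liftN (n : ℕ) (t : Tm) : Tm := (liftAt 0)^[n] t

/-- Capture-avoiding substitution of `s` for index `k` (indices above `k` are decremented),
    `t.substAt k s` is [s / k] t. -/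
def substAt (k : ℕ) : Tm → Tm → Tm
  | .var n, s => if n < k then .var n else if n = k then s else .var (n - 1)
  | .app t u, s => .app (t.substAt k s) (u.substAt k s)
  | .lam t, s => .lam (t.substAt (k + 1) (s.liftAt 0))
  | .zero, _ => .zero
  | .suc t, s => .suc (t.substAt k s)
  | .join, _ => .join
  | .terminates, _ => .terminates
  | .contra, _ => .contra
  | .abort, _ => .abort
  | .fix t, s => .fix (t.substAt (k + 2) ((s.liftAt 0).liftAt 0))
  | .case t u v, s => .case (t.substAt k s) (u.substAt k s) (v.substAt k s)
termination_by t _ => sizeOf t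

/-- Free variables (de Bruijn indices free in the term). -/
def fv : Tm → Finset ℕ
  | .var n => {n}
  | .app t u => t.fv ∪ u.fv
  | .lam t => (t.fv.filter (fun n => 1 ≤ n)).image (· - 1)
  | .zero => ∅
  | .suc t => t.fv
  | .join => ∅
  | .terminates => ∅
  | .contra => ∅
  | .abort => ∅
  | .fix t => (t.fv.filter (fun n => 2 ≤ n)).image (· - 2)
  | .case t u v => t.fv ∪ u.fv ∪ v.fv

end Tm

/-! # Call-by-value operational semantics -/

inductive IsVal : Tm → Prop
  | var (n : ℕ) : IsVal (.var n)
  | zero : IsVal .zero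
  | suc {v : Tm} : IsVal v → IsVal (.suc v)
  | lam (t : Tm) : IsVal (.lam t)
  | fix (t : Tm) : IsVal (.fix t)
  | join : IsVal .join
  | terminates : IsVal .terminates
  | contra : IsVal .contra

/-- Evaluation contexts C ::= [] | Suc C | C t | v C | case C t t'. -/
inductive Ctx : Type
  | hole : Ctx
  | suc : Ctx → Ctx
  | appL : Ctx → Tm → Ctx
  | appR : (v : Tm) → IsVal v → Ctx → Ctx
  | case : Ctx → Tm → Tm → Ctx

def Ctx.plug : Ctx → Tm → Tm
  | .hole, t => t
  | .suc C, t => .suc (C.plug t)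
  | .appL C u, t => .app (C.plug t) u
  | .appR v _ C, t => .app v (C.plug t)
  | .case C u w, t => .case (C.plug t) u w

/-- Primitive β-reduction. -/
inductive Beta : Tm → Tm → Prop
  | appAbs {t v : Tm} : IsVal v → Beta (.app (.lam t) v) (t.substAt 0 v)
  | caseZero {t t' : Tm} : Beta (.case .zero t t') t
  | caseSuc {v t t' : Tm} : IsVal v → Beta (.case (.suc v) t t') (.app t' v)
  | appFix {t v : Tm} :
      IsVal v → Beta (.app (.fix t) v) ((t.substAt 0 (v.liftAt 0)).substAt 0 (.fix t))

/-- Small-step reduction t ↝ t'. -/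
inductive Step : Tm → Tm → Prop
  | ctxt {t t' : Tm} (C : Ctx) : Beta t t' → Step (C.plug t) (C.plug t')
  | abort (C : Ctx) : Step (C.plug .abort) .abort

/-- Multi-step reduction t ↝* t'. -/
def Steps : Tm → Tm → Prop := Relation.ReflTransGen Step

/-! # Types of Teqt -/

inductive Ty : Type
  | nat : Ty
  | pi : Eff → Ty → Ty → Ty   -- Π^θ x:T.T', binds index 0 in the second type
  | eq : Tm → Tm → Ty
  | term : Tm → Ty            -- Terminates t

namespace Ty

def liftAt (c : ℕ) : Ty → Ty
  | .nat => .nat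
  | .pi θ T T' => .pi θ (T.liftAt c) (T'.liftAt (c + 1))
  | .eq t t' => .eq (t.liftAt c) (t'.liftAt c)
  | .term t => .term (t.liftAt c)

def liftN (n : ℕ) (T : Ty) : Ty := (liftAt 0)^[n] T

def substAt (k : ℕ) (s : Tm) : Ty → Ty
  | .nat => .nat
  | .pi θ T T' => .pi θ (T.substAt k s) (T'.substAt (k + 1) (s.liftAt 0))
  | .eq t t' => .eq (t.substAt k s) (t'.substAt k s)
  | .term t => .term (t.substAt k s)
termination_by T => sizeOf T

/-- Number of type constructors (terms do not count). -/
def size : Ty → ℕ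
  | .nat => 1
  | .pi _ T T' => T.size + T'.size + 1
  | .eq _ _ => 1
  | .term _ => 1

theorem size_liftAt (T : Ty) : ∀ c, (T.liftAt c).size = T.size := by
  induction T with
  | nat => intro c; rfl
  | pi θ T T' ih ih' => intro c; simp [Ty.liftAt, Ty.size, ih, ih']
  | eq t t' => intro c; rfl
  | term t => intro c; rfl

end Ty

/-! # Type assignment for the implicit language -/

abbrev TCtx := List Ty

/-- The type of the termination hypothesis `p` of rule T_RecNat,
    in scope Γ, f, x (so f = var 3 resp. x = var 1 under the two Π-binders):
    Π^↓ x₁:nat. Π^↓ p':(x = Suc x₁). Terminates (f x₁). -/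
def pNatTy : Ty :=
  .pi .tot .nat (.pi .tot (.eq (.var 1) (.suc (.var 0))) (.term (.app (.var 3) (.var 1))))

mutual
  /-- Context well-formedness Γ ⊢ Ok. -/
  inductive Ok : TCtx → Prop
    | empty : Ok []
    | cons {Γ : TCtx} {T : Ty} : Ok Γ → WfTy Γ T → Ok (T :: Γ)

  /-- Type well-formedness Γ ⊢ T. -/
  inductive WfTy : TCtx → Ty → Prop
    | nat {Γ : TCtx} : Ok Γ → WfTy Γ .nat
    | pi {Γ : TCtx} {θ : Eff} {T T' : Ty} : WfTy (T :: Γ) T' → WfTy Γ (.pi θ T T')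
    | eq {Γ : TCtx} {t t' : Tm} {T T' : Ty} :
        HasType Γ t T .gen → HasType Γ t' T' .gen → WfTy Γ (.eq t t')
    | term {Γ : TCtx} {t : Tm} {T : Ty} : HasType Γ t T .gen → WfTy Γ (.term t)

  /-- Type assignment Γ ⊢ t : T θ. -/
  inductive HasType : TCtx → Tm → Ty → Eff → Prop
    | var {Γ : TCtx} {x : ℕ} {T : Ty} {θ : Eff} :
        Γ[x]? = some T → Ok Γ → HasType Γ (.var x) (T.liftN (x + 1)) θ
    | join {Γ : TCtx} {t t' t₀ : Tm} {T T' : Ty} {θ : Eff} :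
        Steps t t₀ → Steps t' t₀ → HasType Γ t T .gen → HasType Γ t' T' .gen →
        HasType Γ .join (.eq t t') θ
    | conv {Γ : TCtx} {t t' t₁ t₂ : Tm} {T : Ty} {θ : Eff} :
        HasType Γ t (T.substAt 0 t₂) θ → HasType Γ t' (.eq t₁ t₂) .tot →
        WfTy Γ (T.substAt 0 t₁) → HasType Γ t (T.substAt 0 t₁) θ
    | reflect {Γ : TCtx} {t t' : Tm} {T : Ty} {θ : Eff} :
        HasType Γ t T .gen → HasType Γ t' (.term t) .tot → HasType Γ t T θ
    | reify {Γ : TCtx} {t : Tm} {T : Ty} {θ : Eff} :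
        HasType Γ t T .tot → HasType Γ .terminates (.term t) θ
    | ctxTerm {Γ : TCtx} {t t' : Tm} {θ : Eff} (C : Ctx) :
        HasType Γ t (.term (C.plug t')) θ → HasType Γ t (.term t') θ
    | abs {Γ : TCtx} {t : Tm} {T T' : Ty} {ρ θ : Eff} :
        HasType (T' :: Γ) t T ρ → WfTy Γ (.pi ρ T' T) → HasType Γ (.lam t) (.pi ρ T' T) θ
    | app {Γ : TCtx} {t t' : Tm} {T T' : Ty} {ρ θ : Eff} :
        HasType Γ t (.pi ρ T' T) θ → HasType Γ t' T' θ → SubEff ρ θ →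
        HasType Γ (.app t t') (T.substAt 0 t') θ
    | zero {Γ : TCtx} {θ : Eff} : Ok Γ → HasType Γ .zero .nat θ
    | suc {Γ : TCtx} {t : Tm} {θ : Eff} : HasType Γ t .nat θ → HasType Γ (.suc t) .nat θ
    | fix {Γ : TCtx} {t : Tm} {T T' : Ty} {θ : Eff} :
        HasType (T'.liftAt 0 :: .pi .gen T' T :: Γ) t (T.liftAt 1) .gen →
        HasType Γ (.fix t) (.pi .gen T' T) θ
    | fixNat {Γ : TCtx} {t : Tm} {T : Ty} {θ : Eff} :
        HasType (pNatTy :: .nat :: .pi .gen .nat T :: Γ) (t.liftAt 0)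
          ((T.liftAt 1).liftAt 0) .tot →
        HasType Γ (.fix t) (.pi .tot .nat T) θ
    | case {Γ : TCtx} {t t' t'' : Tm} {T : Ty} {ρ θ : Eff} :
        HasType Γ t .nat θ → HasType Γ t' (T.substAt 0 .zero) θ →
        HasType Γ t'' (.pi ρ .nat ((T.liftAt 1).substAt 0 (.suc (.var 0)))) θ → SubEff ρ θ →
        HasType Γ (.case t t' t'') (T.substAt 0 t) θ
    | contra {Γ : TCtx} {t t' : Tm} {T : Ty} {θ : Eff} :
        HasType Γ t (.eq .zero (.suc t')) .tot → HasType Γ .contra T θ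
    | abort {Γ : TCtx} {T : Ty} : Ok Γ → HasType Γ .abort T .gen
end

/-! # The annotated language -/

mutual
  inductive ATy : Type
    | nat : ATy
    | pi : Eff → ATy → ATy → ATy   -- binds index 0 in the second type
    | eq : ATm → ATm → ATy
    | term : ATm → ATy

  inductive ATm : Type
    | var : ℕ → ATm
    | app : ATm → ATm → ATm
    | lam : Eff → ATy → ATm → ATm        -- λ^θ x:S. a, binds index 0 in a
    | zero : ATm
    | suc : ATm → ATm
    | join : ATm → ATm → ATm             -- join a a'
    | conv : ATy → ATm → ATm → ATm       -- conv x.S a a' (binds index 0 in S); subject a, proof a'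
    | reflect : ATm → ATm → ATm          -- reflect a a'
    | terminates : ATm → ATm             -- terminates a
    | inv : ATm → ATm → ATm              -- inv a a'
    | contra : ATy → ATm → ATm           -- contra S a
    | abort : ATy → ATm                  -- abort S
    | fixNat : ATy → ATm → ATm           -- rec_nat f(x p) : S = a ; S binds x, a binds f (1), x (0)
    | fix : ATy → ATy → ATm → ATm        -- rec f(x:S) : S' = a ; S' binds x, a binds f (1), x (0)
    | case : ATy → ATm → ATm → ATm → ATm -- case x.S a a' a'' (binds index 0 in S)
end

mutual
  def ATm.liftAt (c : ℕ) : ATm → ATm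
    | .var n => if n < c then .var n else .var (n + 1)
    | .app a b => .app (a.liftAt c) (b.liftAt c)
    | .lam θ S a => .lam θ (S.liftAt c) (a.liftAt (c + 1))
    | .zero => .zero
    | .suc a => .suc (a.liftAt c)
    | .join a b => .join (a.liftAt c) (b.liftAt c)
    | .conv S a b => .conv (S.liftAt (c + 1)) (a.liftAt c) (b.liftAt c)
    | .reflect a b => .reflect (a.liftAt c) (b.liftAt c)
    | .terminates a => .terminates (a.liftAt c)
    | .inv a b => .inv (a.liftAt c) (b.liftAt c)
    | .contra S a => .contra (S.liftAt c) (a.liftAt c)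
    | .abort S => .abort (S.liftAt c)
    | .fixNat S a => .fixNat (S.liftAt (c + 1)) (a.liftAt (c + 2))
    | .fix S S' a => .fix (S.liftAt c) (S'.liftAt (c + 1)) (a.liftAt (c + 2))
    | .case S a b d => .case (S.liftAt (c + 1)) (a.liftAt c) (b.liftAt c) (d.liftAt c)

  def ATy.liftAt (c : ℕ) : ATy → ATy
    | .nat => .nat
    | .pi θ S S' => .pi θ (S.liftAt c) (S'.liftAt (c + 1))
    | .eq a b => .eq (a.liftAt c) (b.liftAt c)
    | .term a => .term (a.liftAt c)
end

def ATy.liftN (n : ℕ) (S : ATy) : ATy := (ATy.liftAt 0)^[n] S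

mutual
  /-- `a.substAt k s` is [s / k] a. -/
  def ATm.substAt (k : ℕ) : ATm → ATm → ATm
    | .var n, s => if n < k then .var n else if n = k then s else .var (n - 1)
    | .app a b, s => .app (a.substAt k s) (b.substAt k s)
    | .lam θ S a, s => .lam θ (S.substAt k s) (a.substAt (k + 1) (s.liftAt 0))
    | .zero, _ => .zero
    | .suc a, s => .suc (a.substAt k s)
    | .join a b, s => .join (a.substAt k s) (b.substAt k s)
    | .conv S a b, s => .conv (S.substAt (k + 1) (s.liftAt 0)) (a.substAt k s) (b.substAt k s)
    | .reflect a b, s => .reflect (a.substAt k s) (b.substAt k s)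
    | .terminates a, s => .terminates (a.substAt k s)
    | .inv a b, s => .inv (a.substAt k s) (b.substAt k s)
    | .contra S a, s => .contra (S.substAt k s) (a.substAt k s)
    | .abort S, s => .abort (S.substAt k s)
    | .fixNat S a, s =>
        .fixNat (S.substAt (k + 1) (s.liftAt 0)) (a.substAt (k + 2) ((s.liftAt 0).liftAt 0))
    | .fix S S' a, s =>
        .fix (S.substAt k s) (S'.substAt (k + 1) (s.liftAt 0))
          (a.substAt (k + 2) ((s.liftAt 0).liftAt 0))
    | .case S a b d, s =>
        .case (S.substAt (k + 1) (s.liftAt 0)) (a.substAt k s) (b.substAt k s) (d.substAt k s)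

  /-- `S.substAt k s` is [s / k] S. -/
  def ATy.substAt (k : ℕ) : ATy → ATm → ATy
    | .nat, _ => .nat
    | .pi θ S S', s => .pi θ (S.substAt k s) (S'.substAt (k + 1) (s.liftAt 0))
    | .eq a b, s => .eq (a.substAt k s) (b.substAt k s)
    | .term a, s => .term (a.substAt k s)
end

mutual
  /-- Annotation erasure on terms. -/
  def eraseTm : ATm → Tm
    | .var n => .var n
    | .app a b => .app (eraseTm a) (eraseTm b)
    | .lam _ _ a => .lam (eraseTm a)
    | .zero => .zero
    | .suc a => .suc (eraseTm a)
    | .join _ _ => .join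
    | .conv _ a _ => eraseTm a
    | .reflect a _ => eraseTm a
    | .terminates _ => .terminates
    | .inv a _ => eraseTm a
    | .contra _ _ => .contra
    | .abort _ => .abort
    | .fixNat _ a => .fix (eraseTm a)
    | .fix _ _ a => .fix (eraseTm a)
    | .case _ a b d => .case (eraseTm a) (eraseTm b) (eraseTm d)

  /-- Annotation erasure on types. -/
  def eraseTy : ATy → Ty
    | .nat => .nat
    | .pi θ S S' => .pi θ (eraseTy S) (eraseTy S')
    | .eq a b => .eq (eraseTm a) (eraseTm b)
    | .term a => .term (eraseTm a)
end

/-- The annotated type of the termination hypothesis `p` of rule A_RecNat. -/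
def pATy : ATy :=
  .pi .tot .nat (.pi .tot (.eq (.var 1) (.suc (.var 0))) (.term (.app (.var 3) (.var 1))))

mutual
  /-- Annotated context well-formedness Γ ⊩ Ok. -/
  inductive AOk : List ATy → Prop
    | empty : AOk []
    | cons {Γ : List ATy} {S : ATy} : AOk Γ → AWfTy Γ S → AOk (S :: Γ)

  /-- Annotated type well-formedness Γ ⊩ S. -/
  inductive AWfTy : List ATy → ATy → Prop
    | nat {Γ : List ATy} : AOk Γ → AWfTy Γ .nat
    | pi {Γ : List ATy} {θ : Eff} {S S' : ATy} :
        AWfTy Γ S → AWfTy (S :: Γ) S' → AWfTy Γ (.pi θ S S')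
    | eq {Γ : List ATy} {a a' : ATm} {S S' : ATy} :
        AHasType Γ a S .gen → AHasType Γ a' S' .gen → AWfTy Γ S → AWfTy Γ S' →
        AWfTy Γ (.eq a a')
    | term {Γ : List ATy} {a : ATm} {S : ATy} : AHasType Γ a S .gen → AWfTy Γ (.term a)

  /-- Annotated typing Γ ⊩ a : S θ. -/
  inductive AHasType : List ATy → ATm → ATy → Eff → Prop
    | var {Γ : List ATy} {x : ℕ} {S : ATy} {θ : Eff} :
        Γ[x]? = some S → AOk Γ → AHasType Γ (.var x) (S.liftN (x + 1)) θ
    | join {Γ : List ATy} {a a' : ATm} {S S' : ATy} {t : Tm} {θ : Eff} :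
        Steps (eraseTm a) t → Steps (eraseTm a') t →
        AHasType Γ a S .gen → AHasType Γ a' S' .gen →
        AHasType Γ (.join a a') (.eq a a') θ
    | conv {Γ : List ATy} {a a' a₁ a₂ : ATm} {S : ATy} {θ : Eff} :
        AHasType Γ a (S.substAt 0 a₂) θ → AHasType Γ a' (.eq a₁ a₂) .tot →
        AWfTy Γ (S.substAt 0 a₁) →
        AHasType Γ (.conv S a a') (S.substAt 0 a₁) θ
    | reflect {Γ : List ATy} {a a' : ATm} {S : ATy} {θ : Eff} :
        AHasType Γ a S .gen → AHasType Γ a' (.term a) .tot →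
        AHasType Γ (.reflect a a') S θ
    | reify {Γ : List ATy} {a : ATm} {S : ATy} {θ : Eff} :
        AHasType Γ a S .tot → AHasType Γ (.terminates a) (.term a) θ
    | ctxTerm {Γ : List ATy} {a a' a'' : ATm} {θ : Eff} (C : Ctx) :
        AHasType Γ a (.term a'') θ → eraseTm a'' = C.plug (eraseTm a') →
        AHasType Γ (.inv a a') (.term a') θ
    | abs {Γ : List ATy} {a : ATm} {S S' : ATy} {ρ θ : Eff} :
        AHasType (S' :: Γ) a S ρ → AWfTy Γ (.pi ρ S' S) →
        AHasType Γ (.lam ρ S' a) (.pi ρ S' S) θ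
    | app {Γ : List ATy} {a a' : ATm} {S S' : ATy} {ρ θ : Eff} :
        AHasType Γ a (.pi ρ S' S) θ → AHasType Γ a' S' θ → SubEff ρ θ →
        AHasType Γ (.app a a') (S.substAt 0 a') θ
    | zero {Γ : List ATy} {θ : Eff} : AOk Γ → AHasType Γ .zero .nat θ
    | suc {Γ : List ATy} {a : ATm} {θ : Eff} :
        AHasType Γ a .nat θ → AHasType Γ (.suc a) .nat θ
    | fix {Γ : List ATy} {a : ATm} {S S' : ATy} {θ : Eff} :
        AHasType (S'.liftAt 0 :: .pi .gen S' S :: Γ) a (S.liftAt 1) .gen →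
        AHasType Γ (.fix S' S a) (.pi .gen S' S) θ
    | fixNat {Γ : List ATy} {a : ATm} {S : ATy} {θ : Eff} :
        AHasType (pATy :: .nat :: .pi .gen .nat S :: Γ) (a.liftAt 0)
          ((S.liftAt 1).liftAt 0) .tot →
        AHasType Γ (.fixNat S a) (.pi .tot .nat S) θ
    | case {Γ : List ATy} {a a' a'' : ATm} {S : ATy} {ρ θ : Eff} :
        AHasType Γ a .nat θ → AHasType Γ a' (S.substAt 0 .zero) θ →
        AHasType Γ a'' (.pi ρ .nat ((S.liftAt 1).substAt 0 (.suc (.var 0)))) θ → SubEff ρ θ →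
        AHasType Γ (.case S a a' a'') (S.substAt 0 a) θ
    | contra {Γ : List ATy} {a a' : ATm} {S : ATy} {θ : Eff} :
        AHasType Γ a (.eq .zero (.suc a')) .tot → AHasType Γ (.contra S a) S θ
    | abort {Γ : List ATy} {S : ATy} : AOk Γ → AHasType Γ (.abort S) S .gen
end

/-! # Simple types and simple-type assignment -/

inductive STy : Type
  | nat : STy
  | arrow : STy → STy → STy

/-- Simple-type assignment Σ ⊢ t : A. -/
inductive SHasType : List STy → Tm → STy → Prop
  | var {Sg : List STy} {x : ℕ} {A : STy} : Sg[x]? = some A → SHasType Sg (.var x) A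
  | abs {Sg : List STy} {A1 A2 : STy} {t : Tm} :
      SHasType (A1 :: Sg) t A2 → SHasType Sg (.lam t) (.arrow A1 A2)
  | app {Sg : List STy} {A1 A2 : STy} {t1 t2 : Tm} :
      SHasType Sg t1 (.arrow A2 A1) → SHasType Sg t2 A2 → SHasType Sg (.app t1 t2) A1
  | zero {Sg : List STy} : SHasType Sg .zero .nat
  | suc {Sg : List STy} {t : Tm} : SHasType Sg t .nat → SHasType Sg (.suc t) .nat
  | fix {Sg : List STy} {A : STy} {t : Tm} :
      SHasType (.nat :: .arrow .nat A :: Sg) t A → SHasType Sg (.fix t) (.arrow .nat A)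
  | case {Sg : List STy} {A : STy} {t t' t'' : Tm} :
      SHasType Sg t .nat → SHasType Sg t' A → SHasType Sg t'' (.arrow .nat A) →
      SHasType Sg (.case t t' t'') A
  | abort {Sg : List STy} {A : STy} : SHasType Sg .abort A

/-! # Formulas of the theory W' -/

inductive Fm : Type
  | tru : Fm
  | all : STy → Fm → Fm   -- ∀x:A.F, binds index 0 in F
  | imp : Fm → Fm → Fm
  | and : Fm → Fm → Fm
  | term : Tm → Fm        -- Terminates t
  | eq : Tm → Tm → Fm

namespace Fm

def liftAt (c : ℕ) : Fm → Fm
  | .tru => .tru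
  | .all A F => .all A (F.liftAt (c + 1))
  | .imp F F' => .imp (F.liftAt c) (F'.liftAt c)
  | .and F F' => .and (F.liftAt c) (F'.liftAt c)
  | .term t => .term (t.liftAt c)
  | .eq t t' => .eq (t.liftAt c) (t'.liftAt c)

/-- `F.substAt k s` is [s / k] F. -/
def substAt (k : ℕ) : Fm → Tm → Fm
  | .tru, _ => .tru
  | .all A F, s => .all A (F.substAt (k + 1) (s.liftAt 0))
  | .imp F F', s => .imp (F.substAt k s) (F'.substAt k s)
  | .and F F', s => .and (F.substAt k s) (F'.substAt k s)
  | .term t, s => .term (t.substAt k s)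
  | .eq t t', s => .eq (t.substAt k s) (t'.substAt k s)

end Fm

/-! # Proof rules of the theory W' : the judgment Σ ; H ⊢ F -/

inductive Prove : List STy → List Fm → Fm → Prop
  | assume {Sg : List STy} {H : List Fm} {F : Fm} : F ∈ H → Prove Sg H F
  | alli {Sg : List STy} {H : List Fm} {F : Fm} {A : STy} :
      Prove (A :: Sg) (H.map (Fm.liftAt 0)) F → Prove Sg H (.all A F)
  | alle {Sg : List STy} {H : List Fm} {F : Fm} {A : STy} {t : Tm} :
      Prove Sg H (.all A F) → SHasType Sg t A → Prove Sg H (F.substAt 0 t)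
  | impi {Sg : List STy} {H : List Fm} {F F' : Fm} :
      Prove Sg (F :: H) F' → Prove Sg H (.imp F F')
  | impe {Sg : List STy} {H : List Fm} {F F' : Fm} :
      Prove Sg H (.imp F F') → Prove Sg H F → Prove Sg H F'
  | andi {Sg : List STy} {H : List Fm} {F F' : Fm} :
      Prove Sg H F → Prove Sg H F' → Prove Sg H (.and F F')
  | ande1 {Sg : List STy} {H : List Fm} {F F' : Fm} :
      Prove Sg H (.and F F') → Prove Sg H F
  | ande2 {Sg : List STy} {H : List Fm} {F F' : Fm} :
      Prove Sg H (.and F F') → Prove Sg H F'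
  | truei {Sg : List STy} {H : List Fm} : Prove Sg H .tru
  | contra {Sg : List STy} {H : List Fm} {F : Fm} {t : Tm} :
      Prove Sg H (.eq .zero (.suc t)) → Prove Sg H F
  | ind {Sg : List STy} {H : List Fm} {F : Fm} :
      Prove Sg H (F.substAt 0 .zero) →
      Prove (.nat :: Sg) (.term (.var 0) :: F :: H.map (Fm.liftAt 0))
        ((F.liftAt 1).substAt 0 (.suc (.var 0))) →
      Prove Sg H (.all .nat (.imp (.term (.var 0)) F))
  | compInd {Sg : List STy} {H : List Fm} {F : Fm} {A A' : STy} {t : Tm} :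
      -- F is scoped in z :: x :: Σ (z = index 0 is the distinguished variable)
      Prove (.arrow A' A :: Sg)
        ((.all A' ((F.liftAt 2).substAt 0 (.app (.var 1) (.var 0)))) :: H.map (Fm.liftAt 0))
        (.all A' ((F.liftAt 2).substAt 0 t)) →
      SHasType Sg (.fix t) (.arrow A' A) →
      Prove Sg H (.all A' (.imp (.term (.app ((Tm.fix t).liftAt 0) (.var 0)))
        (F.substAt 0 (.app ((Tm.fix t).liftAt 0) (.var 0)))))
  | term0 {Sg : List STy} {H : List Fm} : Prove Sg H (.term .zero)
  | termS {Sg : List STy} {H : List Fm} {t : Tm} :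
      Prove Sg H (.term t) → Prove Sg H (.term (.suc t))
  | termAbs {Sg : List STy} {H : List Fm} {t : Tm} : Prove Sg H (.term (.lam t))
  | termRec {Sg : List STy} {H : List Fm} {t : Tm} : Prove Sg H (.term (.fix t))
  | termInv {Sg : List STy} {H : List Fm} {t : Tm} (C : Ctx) :
      Prove Sg H (.term (C.plug t)) → Prove Sg H (.term t)
  | notTermAbort {Sg : List STy} {H : List Fm} {F : Fm} :
      Prove Sg H (.term .abort) → Prove Sg H F
  | opsem {Sg : List STy} {H : List Fm} {t t' : Tm} :
      Steps t t' → Prove Sg H (.eq t t')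
  | subst {Sg : List STy} {H : List Fm} {t t' : Tm} {F : Fm} :
      Prove Sg H (.eq t t') → Prove Sg H (F.substAt 0 t) → Prove Sg H (F.substAt 0 t')

/-! # The computational and logical translations -/

/-- Computational translation of terms ⟦t⟧^C : join, terminates, contra ↦ 0. -/
def compile : Tm → Tm
  | .var n => .var n
  | .app t u => .app (compile t) (compile u)
  | .lam t => .lam (compile t)
  | .zero => .zero
  | .suc t => .suc (compile t)
  | .join => .zero
  | .terminates => .zero
  | .contra => .zero
  | .abort => .abort
  | .fix t => .fix (compile t)
  | .case t u v => .case (compile t) (compile u) (compile v)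

/-- Computational translation of types ⟦T⟧^C. -/
def compileTy : Ty → STy
  | .nat => .nat
  | .pi _ T T' => .arrow (compileTy T) (compileTy T')
  | .eq _ _ => .nat
  | .term _ => .nat

/-- ⟦·⟧^L_θ u given the body formula: ↓ gives Terminates u ∧ F, ? gives Terminates u ⇒ F. -/
def effFm : Eff → Tm → Fm → Fm
  | .tot, u, F => .and (.term u) F
  | .gen, u, F => .imp (.term u) F

/-- Logical translation of types: ⟦T⟧^L u. -/
def logTr : Ty → Tm → Fm
  | .nat, _ => .tru
  | .eq t1 t2, _ => .eq (compile t1) (compile t2)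
  | .term t', _ => .term (compile t')
  | .pi θ T T', u =>
      .all (compileTy T)
        (.imp (effFm .tot (.var 0) (logTr (T.liftAt 0) (.var 0)))
              (effFm θ (.app (u.liftAt 0) (.var 0)) (logTr T' (.app (u.liftAt 0) (.var 0)))))
termination_by T _ => T.size
decreasing_by
  · simp only [Ty.size_liftAt, Ty.size]; omega
  · simp only [Ty.size]; omega

/-- ⟦T⟧^L_θ u. -/
def logTrEff (θ : Eff) (T : Ty) (u : Tm) : Fm := effFm θ u (logTr T u)

/-- Logical translation of contexts ⟦Γ⟧^L. -/
def logCtx : List Ty → List Fm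
  | [] => []
  | T :: Γ => logTrEff .tot (T.liftAt 0) (.var 0) :: (logCtx Γ).map (Fm.liftAt 0)

/-- plus ≝ λx₂. rec f(x₁) = case x₁ x₂ (λz. Suc (f z)),
in de Bruijn form (inside the rec: x₁ = 0, f = 1, x₂ = 2). -/
def plusGR : Tm :=
  .lam (.fix (.case (.var 0) (.var 2) (.lam (.suc (.app (.var 2) (.var 0))))))

/-- plustotal ≝ λx₂. ((rec f(x₁) = (case x₁ (λq. terminates) (λz. λq. terminates)) join)). -/
def plustotal : Tm :=
  .lam (.fix (.app
    (.case (.var 0) (.lam .terminates) (.lam (.lam .terminates)))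
    .join))

/-! ## Auxiliary material for the totality proof -/

section PlusTotal

open Relation (ReflTransGen)

lemma Ty.nat_liftN : ∀ n, Ty.liftN n .nat = .nat := by
  intro n
  induction n with
  | zero => rfl
  | succ n ih => rw [Ty.liftN, Function.iterate_succ_apply, show Ty.liftAt 0 .nat = .nat from rfl]; exact ih

lemma var_nat {Γ : TCtx} {x : ℕ} {θ : Eff} (h : Γ[x]? = some .nat) (ok : Ok Γ) :
    HasType Γ (.var x) .nat θ := by
  have := HasType.var (θ := θ) h ok
  rwa [Ty.nat_liftN] at this

lemma nat_substAt (k : ℕ) (s : Tm) : Ty.substAt k s .nat = .nat := by simp [Ty.substAt]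

lemma ok_nat {Γ : TCtx} (h : Ok Γ) : Ok (.nat :: Γ) := Ok.cons h (WfTy.nat h)

/-- plusGR is simply typed at `Π^? nat. Π^? nat. nat` in any well-formed context. -/
lemma plusGR_ty {Γ : TCtx} {θ : Eff} (ok : Ok Γ) :
    HasType Γ plusGR (.pi .gen .nat (.pi .gen .nat .nat)) θ := by
  have ok1 : Ok (.nat :: Γ) := ok_nat ok
  have wfpi : WfTy (.nat :: Γ) (.pi .gen .nat .nat) :=
    WfTy.pi (WfTy.nat (ok_nat ok1))
  have ok2 : Ok (.pi .gen .nat .nat :: .nat :: Γ) := Ok.cons ok1 wfpi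
  have ok3 : Ok (.nat :: .pi .gen .nat .nat :: .nat :: Γ) := ok_nat ok2
  have ok4 : Ok (.nat :: .nat :: .pi .gen .nat .nat :: .nat :: Γ) := ok_nat ok3
  -- the body of the recursion
  have hf : HasType (.nat :: Γ)
      (.fix (.case (.var 0) (.var 2) (.lam (.suc (.app (.var 2) (.var 0))))))
      (.pi .gen .nat .nat) .gen := by
    apply HasType.fix (T' := .nat) (T := .nat)
    show HasType (.nat :: .pi .gen .nat .nat :: .nat :: Γ) _ .nat .gen
    have hcase := HasType.case (Γ := .nat :: .pi .gen .nat .nat :: .nat :: Γ)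
      (T := .nat) (ρ := .gen) (θ := .gen)
      (t := .var 0) (t' := .var 2) (t'' := .lam (.suc (.app (.var 2) (.var 0))))
      (var_nat (by simp) ok3) ?_ ?_ (SubEff.refl .gen)
    · rwa [nat_substAt] at hcase
    · rw [nat_substAt]; exact var_nat (by simp) ok3
    · show HasType _ _ (.pi .gen .nat ((Ty.liftAt 1 .nat).substAt 0 (.suc (.var 0)))) .gen
      rw [show Ty.liftAt 1 .nat = .nat from rfl, nat_substAt]
      apply HasType.abs (ρ := .gen)
      · have happ := HasType.app (Γ := .nat :: .nat :: .pi .gen .nat .nat :: .nat :: Γ)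
          (T := .nat) (T' := .nat) (ρ := .gen) (θ := .gen)
          (t := .var 2) (t' := .var 0) ?_ (var_nat (by simp) ok4) (SubEff.refl .gen)
        · rw [nat_substAt] at happ; exact HasType.suc happ
        · exact HasType.var (T := .pi .gen .nat .nat) rfl ok4
      · exact WfTy.pi (WfTy.nat (ok_nat ok3))
  exact HasType.abs hf (WfTy.pi wfpi)

lemma plus_app {Γ : TCtx} {a b : Tm} (ok : Ok Γ)
    (ha : HasType Γ a .nat .gen) (hb : HasType Γ b .nat .gen) :
    HasType Γ (.app (.app plusGR a) b) .nat .gen := by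
  have h1 := HasType.app (plusGR_ty ok) ha (SubEff.refl .gen)
  rw [show Ty.substAt 0 a (.pi .gen .nat .nat) = .pi .gen .nat .nat by
    simp [Ty.substAt, nat_substAt]] at h1
  have h2 := HasType.app h1 hb (SubEff.refl .gen)
  rwa [nat_substAt] at h2

/-- `T0` is the codomain of the totality statement: `Terminates (plus x₂ x₁)`
    with `x₂ = var 1`, `x₁ = var 0`. -/
def T0 : Ty := .term (.app (.app plusGR (.var 1)) (.var 0))

/-- The context inside the `fixNat` rule. -/
def G2 : TCtx := [pNatTy, .nat, .pi .gen .nat T0, .nat]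

lemma ok_G2 : Ok G2 := by
  have ok1 : Ok [(.nat : Ty)] := ok_nat Ok.empty
  have ok2 : Ok ([.nat, .nat] : TCtx) := ok_nat ok1
  have wfT0 : WfTy ([.nat, .nat] : TCtx) T0 :=
    WfTy.term (plus_app ok2 (var_nat (by simp) ok2) (var_nat (by simp) ok2))
  have wfF : WfTy [(.nat : Ty)] (.pi .gen .nat T0) := WfTy.pi wfT0
  have ok3 : Ok ([.pi .gen .nat T0, .nat] : TCtx) := Ok.cons ok1 wfF
  have ok4 : Ok ([.nat, .pi .gen .nat T0, .nat] : TCtx) := ok_nat ok3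
  refine Ok.cons ok4 ?_
  -- WfTy [.nat, .pi .gen .nat T0, .nat] pNatTy
  have ok5 : Ok ([.nat, .nat, .pi .gen .nat T0, .nat] : TCtx) := ok_nat ok4
  refine WfTy.pi ?_
  refine WfTy.pi (T := .eq (.var 1) (.suc (.var 0))) ?_
  -- first get Ok of the context with the equation
  have wfeq : WfTy ([.nat, .nat, .pi .gen .nat T0, .nat] : TCtx) (.eq (.var 1) (.suc (.var 0))) :=
    WfTy.eq (var_nat (by simp) ok5) (HasType.suc (var_nat (by simp) ok5))
  have ok6 : Ok (.eq (.var 1) (.suc (.var 0)) :: [.nat, .nat, .pi .gen .nat T0, .nat]) :=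
    Ok.cons ok5 wfeq
  refine WfTy.term (T := .term (.app (.app plusGR (.var 4)) (.var 1))) ?_
  have hf : HasType (.eq (.var 1) (.suc (.var 0)) :: [.nat, .nat, .pi .gen .nat T0, .nat])
      (.var 3) (.pi .gen .nat (.term (.app (.app plusGR (.var 5)) (.var 0)))) .gen := by
    exact HasType.var (T := .pi .gen .nat T0) rfl ok6
  have happ := HasType.app hf (var_nat (x := 1) rfl ok6) (SubEff.refl .gen)
  simpa [Ty.substAt, Tm.substAt, Tm.liftAt, plusGR] using happ

end PlusTotal
section PlusTotalMain

/-- The context of the zero branch. -/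
def Gz : TCtx := .eq (.var 1) .zero :: G2

/-- The context of the suc branch body. -/
def Gs : TCtx := .eq (.var 2) (.suc (.var 0)) :: .nat :: G2

lemma ok_Gz : Ok Gz := by
  refine Ok.cons ok_G2 (WfTy.eq (var_nat (by simp [G2]) ok_G2) (HasType.zero ok_G2))

lemma ok_Gn : Ok (.nat :: G2) := ok_nat ok_G2

lemma ok_Gs : Ok Gs := by
  refine Ok.cons ok_Gn (WfTy.eq (var_nat (by simp [G2]) ok_Gn)
    (HasType.suc (var_nat (by simp [G2]) ok_Gn)))

/-- Reduction: plus x₂ 0 ↝* x₂ (with x₂ = var 4). -/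
lemma stepsA : Steps (.app (.app plusGR (.var 4)) .zero) (.var 4) := by
  have s1 : Step (.app (.app plusGR (.var 4)) .zero)
      (.app (.fix (.case (.var 0) (.var 6) (.lam (.suc (.app (.var 2) (.var 0)))))) .zero) := by
    have h := Step.ctxt (Ctx.appL Ctx.hole .zero)
      (Beta.appAbs (t := .fix (.case (.var 0) (.var 2) (.lam (.suc (.app (.var 2) (.var 0))))))
        (IsVal.var 4))
    simpa [Ctx.plug, Tm.substAt, Tm.liftAt, plusGR] using h
  have s2 : Step (.app (.fix (.case (.var 0) (.var 6) (.lam (.suc (.app (.var 2) (.var 0)))))) .zero)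
      (.case .zero (.var 4) (.lam (.suc (.app (.fix (.case (.var 0) (.var 7) (.lam (.suc (.app (.var 2) (.var 0)))))) (.var 0))))) := by
    have h := Step.ctxt Ctx.hole
      (Beta.appFix (t := .case (.var 0) (.var 6) (.lam (.suc (.app (.var 2) (.var 0)))))
        IsVal.zero)
    simpa [Ctx.plug, Tm.substAt, Tm.liftAt] using h
  have s3 : Step (.case .zero (.var 4) (.lam (.suc (.app (.fix (.case (.var 0) (.var 7) (.lam (.suc (.app (.var 2) (.var 0)))))) (.var 0))))) (.var 4) := by
    have h := Step.ctxt Ctx.hole (Beta.caseZero (t := .var 4)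
      (t' := .lam (.suc (.app (.fix (.case (.var 0) (.var 7) (.lam (.suc (.app (.var 2) (.var 0)))))) (.var 0)))))
    simpa [Ctx.plug] using h
  exact .head s1 (.head s2 (.head s3 .refl))

/-- Reduction: plus x₂ (suc z) ↝* suc (app (fix …) z)  (x₂ = var 5, z = var 1). -/
lemma stepsB1 : Steps (.app (.app plusGR (.var 5)) (.suc (.var 1)))
    (.suc (.app (.fix (.case (.var 0) (.var 7) (.lam (.suc (.app (.var 2) (.var 0)))))) (.var 1))) := by
  have s1 : Step (.app (.app plusGR (.var 5)) (.suc (.var 1)))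
      (.app (.fix (.case (.var 0) (.var 7) (.lam (.suc (.app (.var 2) (.var 0)))))) (.suc (.var 1))) := by
    have h := Step.ctxt (Ctx.appL Ctx.hole (.suc (.var 1)))
      (Beta.appAbs (t := .fix (.case (.var 0) (.var 2) (.lam (.suc (.app (.var 2) (.var 0))))))
        (IsVal.var 5))
    simpa [Ctx.plug, Tm.substAt, Tm.liftAt, plusGR] using h
  have s2 : Step (.app (.fix (.case (.var 0) (.var 7) (.lam (.suc (.app (.var 2) (.var 0)))))) (.suc (.var 1)))
      (.case (.suc (.var 1)) (.var 5) (.lam (.suc (.app (.fix (.case (.var 0) (.var 8) (.lam (.suc (.app (.var 2) (.var 0)))))) (.var 0))))) := by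
    have h := Step.ctxt Ctx.hole
      (Beta.appFix (t := .case (.var 0) (.var 7) (.lam (.suc (.app (.var 2) (.var 0)))))
        (IsVal.suc (IsVal.var 1)))
    simpa [Ctx.plug, Tm.substAt, Tm.liftAt] using h
  have s3 : Step (.case (.suc (.var 1)) (.var 5) (.lam (.suc (.app (.fix (.case (.var 0) (.var 8) (.lam (.suc (.app (.var 2) (.var 0)))))) (.var 0)))))
      (.app (.lam (.suc (.app (.fix (.case (.var 0) (.var 8) (.lam (.suc (.app (.var 2) (.var 0)))))) (.var 0)))) (.var 1)) := by
    have h := Step.ctxt Ctx.hole (Beta.caseSuc (v := .var 1) (t := .var 5)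
      (t' := .lam (.suc (.app (.fix (.case (.var 0) (.var 8) (.lam (.suc (.app (.var 2) (.var 0)))))) (.var 0))))
      (IsVal.var 1))
    simpa [Ctx.plug] using h
  have s4 : Step (.app (.lam (.suc (.app (.fix (.case (.var 0) (.var 8) (.lam (.suc (.app (.var 2) (.var 0)))))) (.var 0)))) (.var 1))
      (.suc (.app (.fix (.case (.var 0) (.var 7) (.lam (.suc (.app (.var 2) (.var 0)))))) (.var 1))) := by
    have h := Step.ctxt Ctx.hole
      (Beta.appAbs (t := .suc (.app (.fix (.case (.var 0) (.var 8) (.lam (.suc (.app (.var 2) (.var 0)))))) (.var 0)))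
        (IsVal.var 1))
    simpa [Ctx.plug, Tm.substAt, Tm.liftAt] using h
  exact .head s1 (.head s2 (.head s3 (.head s4 .refl)))

/-- Reduction: suc (plus x₂ z) ↝* suc (app (fix …) z). -/
lemma stepsB2 : Steps (.suc (.app (.app plusGR (.var 5)) (.var 1)))
    (.suc (.app (.fix (.case (.var 0) (.var 7) (.lam (.suc (.app (.var 2) (.var 0)))))) (.var 1))) := by
  have s1 : Step (.suc (.app (.app plusGR (.var 5)) (.var 1)))
      (.suc (.app (.fix (.case (.var 0) (.var 7) (.lam (.suc (.app (.var 2) (.var 0)))))) (.var 1))) := by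
    have h := Step.ctxt (Ctx.suc (Ctx.appL Ctx.hole (.var 1)))
      (Beta.appAbs (t := .fix (.case (.var 0) (.var 2) (.lam (.suc (.app (.var 2) (.var 0))))))
        (IsVal.var 5))
    simpa [Ctx.plug, Tm.substAt, Tm.liftAt, plusGR] using h
  exact .head s1 .refl

/-- Zero branch body: in Gz, terminates : Terminates (plus x₂ x). -/
lemma zero_branch_body :
    HasType Gz .terminates (.term (.app (.app plusGR (.var 4)) (.var 2))) .tot := by
  have okz := ok_Gz
  -- terminates : Terminates x₂
  have h1 : HasType Gz .terminates (.term (.var 4)) .tot :=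
    HasType.reify (var_nat (by simp [Gz, G2]) okz)
  -- join : plus x₂ 0 = x₂
  have hplus0 : HasType Gz (.app (.app plusGR (.var 4)) .zero) .nat .gen :=
    plus_app okz (var_nat (by simp [Gz, G2]) okz) (HasType.zero okz)
  have h2 : HasType Gz .join (.eq (.app (.app plusGR (.var 4)) .zero) (.var 4)) .tot :=
    HasType.join stepsA .refl hplus0 (var_nat (by simp [Gz, G2]) okz)
  -- conv along that equation with motive Terminates (var 0)
  have h3 : HasType Gz .terminates (.term (.app (.app plusGR (.var 4)) .zero)) .tot := by
    have h := HasType.conv (T := .term (.var 0))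
      (t₁ := .app (.app plusGR (.var 4)) .zero) (t₂ := .var 4)
      (by simpa [Ty.substAt, Tm.substAt] using h1) h2
      (by simpa [Ty.substAt, Tm.substAt] using WfTy.term hplus0)
    simpa [Ty.substAt, Tm.substAt] using h
  -- conv along q : x = 0 with motive Terminates (plus x₂ (var 0))
  have hq : HasType Gz (.var 0) (.eq (.var 2) .zero) .tot := by
    have h := HasType.var (Γ := Gz) (x := 0) (T := .eq (.var 1) .zero) (θ := .tot) (by simp [Gz]) okz
    simpa [Ty.liftN, Ty.liftAt, Tm.liftAt] using h
  have hplusx : HasType Gz (.app (.app plusGR (.var 4)) (.var 2)) .nat .gen :=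
    plus_app okz (var_nat (by simp [Gz, G2]) okz) (var_nat (by simp [Gz, G2]) okz)
  have h4 := HasType.conv (T := .term (.app (.app plusGR (.var 5)) (.var 0)))
    (t₁ := .var 2) (t₂ := .zero)
    (by simpa [Ty.substAt, Tm.substAt, Tm.liftAt, plusGR] using h3) hq
    (by simpa [Ty.substAt, Tm.substAt, Tm.liftAt, plusGR] using WfTy.term hplusx)
  simpa [Ty.substAt, Tm.substAt, Tm.liftAt, plusGR] using h4

/-- Suc branch body: in Gs, terminates : Terminates (plus x₂ x). -/
lemma suc_branch_body :
    HasType Gs .terminates (.term (.app (.app plusGR (.var 5)) (.var 3))) .tot := by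
  have oks := ok_Gs
  -- f z : Terminates (plus x₂ z), at effect ?
  have hf : HasType Gs (.var 4) (.pi .gen .nat (.term (.app (.app plusGR (.var 6)) (.var 0)))) .gen := by
    have h := HasType.var (Γ := Gs) (x := 4) (T := .pi .gen .nat T0) (θ := .gen) (by simp [Gs, G2]) oks
    simpa [Ty.liftN, Ty.liftAt, Tm.liftAt, T0, plusGR] using h
  have hz : HasType Gs (.var 1) .nat .gen := var_nat (by simp [Gs, G2]) oks
  have s3 : HasType Gs (.app (.var 4) (.var 1)) (.term (.app (.app plusGR (.var 5)) (.var 1))) .gen := by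
    have h := HasType.app hf hz (SubEff.refl .gen)
    simpa [Ty.substAt, Tm.substAt, Tm.liftAt, plusGR] using h
  -- p z q : Terminates (f z), at effect ↓
  have hp : HasType Gs (.var 2)
      (.pi .tot .nat (.pi .tot (.eq (.var 4) (.suc (.var 0))) (.term (.app (.var 6) (.var 1))))) .tot := by
    have h := HasType.var (Γ := Gs) (x := 2) (T := pNatTy) (θ := .tot) (by simp [Gs, G2]) oks
    simpa [Ty.liftN, Ty.liftAt, Tm.liftAt, pNatTy] using h
  have hzt : HasType Gs (.var 1) .nat .tot := var_nat (by simp [Gs, G2]) oks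
  have s6 : HasType Gs (.app (.var 2) (.var 1))
      (.pi .tot (.eq (.var 3) (.suc (.var 1))) (.term (.app (.var 5) (.var 2)))) .tot := by
    have h := HasType.app hp hzt (SubEff.refl .tot)
    simpa [Ty.substAt, Tm.substAt, Tm.liftAt] using h
  have hq : HasType Gs (.var 0) (.eq (.var 3) (.suc (.var 1))) .tot := by
    have h := HasType.var (Γ := Gs) (x := 0) (T := .eq (.var 2) (.suc (.var 0))) (θ := .tot) (by simp [Gs]) oks
    simpa [Ty.liftN, Ty.liftAt, Tm.liftAt] using h
  have s8 : HasType Gs (.app (.app (.var 2) (.var 1)) (.var 0))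
      (.term (.app (.var 4) (.var 1))) .tot := by
    have h := HasType.app s6 hq (SubEff.refl .tot)
    simpa [Ty.substAt, Tm.substAt, Tm.liftAt] using h
  -- reflect: f z : Terminates (plus x₂ z) at ↓
  have s9 : HasType Gs (.app (.var 4) (.var 1)) (.term (.app (.app plusGR (.var 5)) (.var 1))) .tot :=
    HasType.reflect s3 s8
  -- reflect again: plus x₂ z : nat at ↓
  have s10 : HasType Gs (.app (.app plusGR (.var 5)) (.var 1)) .nat .gen :=
    plus_app oks (var_nat (by simp [Gs, G2]) oks) hz
  have s11 : HasType Gs (.app (.app plusGR (.var 5)) (.var 1)) .nat .tot :=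
    HasType.reflect s10 s9
  have s13 : HasType Gs .terminates (.term (.suc (.app (.app plusGR (.var 5)) (.var 1)))) .tot :=
    HasType.reify (HasType.suc s11)
  -- join : plus x₂ (suc z) = suc (plus x₂ z)
  have hL : HasType Gs (.app (.app plusGR (.var 5)) (.suc (.var 1))) .nat .gen :=
    plus_app oks (var_nat (by simp [Gs, G2]) oks) (HasType.suc hz)
  have s14 : HasType Gs .join
      (.eq (.app (.app plusGR (.var 5)) (.suc (.var 1))) (.suc (.app (.app plusGR (.var 5)) (.var 1)))) .tot :=
    HasType.join stepsB1 stepsB2 hL (HasType.suc s10)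
  -- conv to Terminates (plus x₂ (suc z))
  have s15 : HasType Gs .terminates (.term (.app (.app plusGR (.var 5)) (.suc (.var 1)))) .tot := by
    have h := HasType.conv (T := .term (.var 0))
      (t₁ := .app (.app plusGR (.var 5)) (.suc (.var 1)))
      (t₂ := .suc (.app (.app plusGR (.var 5)) (.var 1)))
      (by simpa [Ty.substAt, Tm.substAt] using s13) s14
      (by simpa [Ty.substAt, Tm.substAt] using WfTy.term hL)
    simpa [Ty.substAt, Tm.substAt] using h
  -- conv along q : x = suc z to Terminates (plus x₂ x)
  have hplusx : HasType Gs (.app (.app plusGR (.var 5)) (.var 3)) .nat .gen :=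
    plus_app oks (var_nat (by simp [Gs, G2]) oks) (var_nat (by simp [Gs, G2]) oks)
  have h := HasType.conv (T := .term (.app (.app plusGR (.var 6)) (.var 0)))
    (t₁ := .var 3) (t₂ := .suc (.var 1))
    (by simpa [Ty.substAt, Tm.substAt, Tm.liftAt, plusGR] using s15) hq
    (by simpa [Ty.substAt, Tm.substAt, Tm.liftAt, plusGR] using WfTy.term hplusx)
  simpa [Ty.substAt, Tm.substAt, Tm.liftAt, plusGR] using h

end PlusTotalMain
/-- The fixNat premise: the whole recursion body is well-typed in G2. -/
lemma fix_body_ty :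
    HasType G2 (.app (.case (.var 1) (.lam .terminates) (.lam (.lam .terminates))) .join)
      (.term (.app (.app plusGR (.var 3)) (.var 1))) .tot := by
  have ok2 := ok_G2
  -- the case analysis
  have hz : HasType G2 (.lam .terminates)
      (.pi .tot (.eq (.var 1) .zero) (.term (.app (.app plusGR (.var 4)) (.var 2)))) .tot := by
    have hb0 : HasType Gz (.app (.app plusGR (.var 4)) (.var 2)) .nat .gen :=
      plus_app ok_Gz (var_nat (by simp [Gz, G2]) ok_Gz) (var_nat (by simp [Gz, G2]) ok_Gz)
    exact HasType.abs zero_branch_body (WfTy.pi (WfTy.term hb0))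
  have hs : HasType G2 (.lam (.lam .terminates))
      (.pi .tot .nat (.pi .tot (.eq (.var 2) (.suc (.var 0)))
        (.term (.app (.app plusGR (.var 5)) (.var 3))))) .tot := by
    have wf_inner : WfTy (.nat :: G2) (.pi .tot (.eq (.var 2) (.suc (.var 0)))
        (.term (.app (.app plusGR (.var 5)) (.var 3)))) := by
      have hbs : HasType Gs (.app (.app plusGR (.var 5)) (.var 3)) .nat .gen :=
        plus_app ok_Gs (var_nat (by simp [Gs, G2]) ok_Gs) (var_nat (by simp [Gs, G2]) ok_Gs)
      exact WfTy.pi (WfTy.term hbs)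
    exact HasType.abs (HasType.abs suc_branch_body wf_inner) (WfTy.pi wf_inner)
  have hcase : HasType G2 (.case (.var 1) (.lam .terminates) (.lam (.lam .terminates)))
      (.pi .tot (.eq (.var 1) (.var 1)) (.term (.app (.app plusGR (.var 4)) (.var 2)))) .tot := by
    have h := HasType.case (Γ := G2)
      (T := .pi .tot (.eq (.var 2) (.var 0)) (.term (.app (.app plusGR (.var 5)) (.var 3))))
      (ρ := .tot) (θ := .tot)
      (var_nat (x := 1) (by simp [G2]) ok2)
      (by simpa [Ty.substAt, Tm.substAt, Tm.liftAt, plusGR] using hz)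
      (by simpa [Ty.substAt, Tm.substAt, Ty.liftAt, Tm.liftAt, plusGR] using hs)
      (SubEff.refl .tot)
    simpa [Ty.substAt, Tm.substAt, Tm.liftAt, plusGR] using h
  have hv1 : HasType G2 (.var 1) .nat .gen := var_nat (by simp [G2]) ok2
  have hjoin : HasType G2 .join (.eq (.var 1) (.var 1)) .tot :=
    HasType.join .refl .refl hv1 hv1
  have h := HasType.app hcase hjoin (SubEff.refl .tot)
  simpa [Ty.substAt, Tm.substAt, Tm.liftAt, plusGR] using h
/-- **External totality proof for general-recursive addition**:
· ⊢ plustotal : Π^↓ x₂:nat. Π^↓ x₁:nat. Terminates (plus x₂ x₁) ↓. -/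
theorem plustotal_typing :
    HasType [] plustotal
      (.pi .tot .nat (.pi .tot .nat
        (.term (.app (.app plusGR (.var 1)) (.var 0))))) .tot := by
  have ok1 : Ok [(.nat : Ty)] := ok_nat Ok.empty
  have ok2 : Ok ([.nat, .nat] : TCtx) := ok_nat ok1
  have hfix : HasType [(.nat : Ty)]
      (.fix (.app (.case (.var 0) (.lam .terminates) (.lam (.lam .terminates))) .join))
      (.pi .tot .nat T0) .tot := by
    apply HasType.fixNat (T := T0)
    exact fix_body_ty
  have hplus : HasType ([.nat, .nat] : TCtx) (.app (.app plusGR (.var 1)) (.var 0)) .nat .gen :=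
    plus_app ok2 (var_nat (x := 1) (by simp) ok2) (var_nat (x := 0) (by simp) ok2)
  exact HasType.abs hfix (WfTy.pi (WfTy.pi (WfTy.term hplus)))
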